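/- Let n ≥ 1. For every integer j ≥ 1, the degree-j homogeneous component of the invariant algebra ℂ⟨u,v⟩^{D_{2n}} is spanned over ℂ by the elements (u^b v^c + v^b u^c)∘σ, where b, c ≥ 0 are integers with b + c = j and b ≡ c (mod n), and σ ∈ Sym(j). In particular, ℂ⟨u,v⟩^{D_{2n}} is generated as an S-algebra by the elements s_a = u^a v^a + v^a u^a (a ≥ 1) and p_{(b,c)} = u^b v^c + v^b u^c (b ≡ c mod n). -/

import Mathlib

open scoped Real

noncomputable section

/-- Words in two letters. -/
abbrev FW := FreeMonoid (Fin 2)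

/-- The free associative unital ℂ-algebra on two generators. -/
abbrev FA := MonoidAlgebra ℂ FW

/-- The generator `u`. -/
def gu : FA := MonoidAlgebra.of ℂ FW (FreeMonoid.of 0)

/-- The generator `v`. -/
def gv : FA := MonoidAlgebra.of ℂ FW (FreeMonoid.of 1)

/-- The algebra endomorphism `ρ` with `ρ(u) = ξ u`, `ρ(v) = ξ⁻¹ v`, `ξ = exp(2πi/n)`. -/
def dRho (n : ℕ) : FA →ₐ[ℂ] FA :=
  MonoidAlgebra.lift ℂ FA FW
    (FreeMonoid.lift fun i : Fin 2 =>
      if i = 0 then Complex.exp (2 * Real.pi * Complex.I / n) • gu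
      else (Complex.exp (2 * Real.pi * Complex.I / n))⁻¹ • gv)

/-- The algebra endomorphism `τ` exchanging `u` and `v`. -/
def dTau : FA →ₐ[ℂ] FA :=
  MonoidAlgebra.lift ℂ FA FW
    (FreeMonoid.lift fun i : Fin 2 => if i = 0 then gv else gu)

/-- The invariant algebra `ℂ⟨u,v⟩^{D_{2n}}`. -/
def invAlg (n : ℕ) : Subalgebra ℂ FA :=
  AlgHom.equalizer (dRho n) (AlgHom.id ℂ FA) ⊓ AlgHom.equalizer dTau (AlgHom.id ℂ FA)

/-- The degree-`j` homogeneous component of `ℂ⟨u,v⟩`: the span of words of length `j`. -/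
def degComp (j : ℕ) : Submodule ℂ FA :=
  MonoidAlgebra.supported ℂ ℂ {w : FW | FreeMonoid.length w = j}

/-- Koryukin's position permutation on words: if `w` has length `k`, the `i`-th letter of
`w ∘ σ` is the `σ⁻¹(i)`-th letter of `w`; words of other lengths are left unchanged. -/
def wordPerm (k : ℕ) (σ : Equiv.Perm (Fin k)) (w : FW) : FW :=
  if h : (FreeMonoid.toList w).length = k then
    FreeMonoid.ofList
      (List.ofFn fun i : Fin k => (FreeMonoid.toList w).get (finCongr h.symm (σ⁻¹ i)))
  else w

/-- Koryukin's action of `Sym(k)`, extended ℂ-linearly. -/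
def koryukin (k : ℕ) (σ : Equiv.Perm (Fin k)) : FA →ₗ[ℂ] FA :=
  MonoidAlgebra.mapDomainLinearMap ℂ ℂ (wordPerm k σ)

/-- A subalgebra is graded if it contains every homogeneous component of each of
its elements. -/
def IsGradedSub (D : Subalgebra ℂ FA) : Prop :=
  ∀ f ∈ D, ∀ j : ℕ, MonoidAlgebra.ofCoeff (Finsupp.filter (fun w : FW => FreeMonoid.length w = j) f.coeff) ∈ D

/-- A subalgebra is permutation-closed if it is closed under Koryukin's action on
homogeneous elements. -/
def PermClosed (D : Subalgebra ℂ FA) : Prop :=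
  ∀ (k : ℕ) (σ : Equiv.Perm (Fin k)), ∀ f ∈ D, f ∈ degComp k → koryukin k σ f ∈ D

def xi (n : ℕ) : ℂ := Complex.exp (2 * Real.pi * Complex.I / n)
def sw : Fin 2 → Fin 2 := fun i => if i = 0 then 1 else 0
lemma sw_sw (i : Fin 2) : sw (sw i) = i := by fin_cases i <;> rfl
lemma sw_invol : Function.Involutive sw := sw_sw
def scal (n : ℕ) (w : FW) : ℂ :=
  (xi n) ^ ((FreeMonoid.toList w).count 0) * ((xi n)⁻¹) ^ ((FreeMonoid.toList w).count 1)

lemma xi_ne_zero (n : ℕ) : xi n ≠ 0 := Complex.exp_ne_zero _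

lemma dRho_of (n : ℕ) (w : FW) :
    dRho n (MonoidAlgebra.of ℂ FW w) = scal n w • MonoidAlgebra.of ℂ FW w := by
  induction w using FreeMonoid.recOn with
  | one =>
    simp [scal, map_one, FreeMonoid.toList_one]
  | of_mul x xs ih =>
    rw [map_mul, map_mul, ih]
    have h1 : dRho n (MonoidAlgebra.of ℂ FW (FreeMonoid.of x)) =
        (if x = 0 then xi n else (xi n)⁻¹) • MonoidAlgebra.of ℂ FW (FreeMonoid.of x) := by
      rw [dRho, MonoidAlgebra.lift_of, FreeMonoid.lift_eval_of]
      fin_cases x <;> simp [xi, gu, gv]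
    rw [h1, smul_mul_smul_comm, ← map_mul]
    congr 1
    simp only [scal, FreeMonoid.toList_of_mul, FreeMonoid.toList_mul]
    fin_cases x <;> simp [List.count_cons, pow_succ] <;> ring

lemma dTau_of (w : FW) :
    dTau (MonoidAlgebra.of ℂ FW w) = MonoidAlgebra.of ℂ FW (FreeMonoid.map sw w) := by
  induction w using FreeMonoid.recOn with
  | one => simp [map_one]
  | of_mul x xs ih =>
    simp only [map_mul, ih]
    congr 1
    rw [dTau, MonoidAlgebra.lift_of, FreeMonoid.lift_eval_of, FreeMonoid.map_of]
    fin_cases x <;> simp [sw, gu, gv]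

lemma map_sw_sw (w : FW) : FreeMonoid.map sw (FreeMonoid.map sw w) = w := by
  apply FreeMonoid.toList.injective
  simp [FreeMonoid.toList_map, List.map_map, Function.comp_def, sw_sw]

lemma map_sw_inj : Function.Injective (FreeMonoid.map sw : FW → FW) :=
  Function.Involutive.injective map_sw_sw

lemma dRho_apply (n : ℕ) (f : FA) (w : FW) : (dRho n f).coeff w = scal n w * f.coeff w := by
  induction f using MonoidAlgebra.induction_linear with
  | zero => simp
  | add f g hf hg =>
    rw [map_add, MonoidAlgebra.coeff_add, Finsupp.add_apply, hf, hg, MonoidAlgebra.coeff_add,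
      Finsupp.add_apply]; ring
  | single a b =>
    have : (MonoidAlgebra.single a b : FA) = b • MonoidAlgebra.of ℂ FW a := by
      simp [MonoidAlgebra.smul_single', MonoidAlgebra.of_apply]
    conv_lhs => rw [this]
    rw [map_smul, dRho_of, smul_smul, MonoidAlgebra.of_apply]
    classical
    show ((b * scal n a) • (MonoidAlgebra.single a 1 : FA)).coeff w =
      scal n w * (MonoidAlgebra.single a b).coeff w
    rw [MonoidAlgebra.smul_single', MonoidAlgebra.coeff_single, MonoidAlgebra.coeff_single,
      Finsupp.single_apply, Finsupp.single_apply, mul_one]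
    by_cases h : a = w
    · subst h; simp; ring
    · simp [h]

lemma dTau_eq (f : FA) : dTau f = MonoidAlgebra.mapDomain (FreeMonoid.map sw) f := by
  induction f using MonoidAlgebra.induction_linear with
  | zero => simp
  | add f g hf hg => rw [map_add, hf, hg, MonoidAlgebra.mapDomain_add]
  | single a b =>
    have : (MonoidAlgebra.single a b : FA) = b • MonoidAlgebra.of ℂ FW a := by
      simp [MonoidAlgebra.smul_single', MonoidAlgebra.of_apply]
    rw [this, map_smul, dTau_of, MonoidAlgebra.mapDomain_smul]
    congr 1
    rw [MonoidAlgebra.of_apply, MonoidAlgebra.of_apply, MonoidAlgebra.mapDomain_single]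

lemma dTau_apply (f : FA) (w : FW) : (dTau f).coeff w = f.coeff (FreeMonoid.map sw w) := by
  rw [dTau_eq]
  show (Finsupp.mapDomain (FreeMonoid.map sw) f.coeff) w = _
  conv_lhs => rw [← map_sw_sw w]
  exact Finsupp.mapDomain_apply map_sw_inj f.coeff _

lemma koryukin_single (k : ℕ) (σ : Equiv.Perm (Fin k)) (w : FW) (c : ℂ) :
    koryukin k σ (MonoidAlgebra.single w c) = MonoidAlgebra.single (wordPerm k σ w) c := by
  exact MonoidAlgebra.mapDomainLinearMap_single _ _ _

lemma ofFn_get_congr {α : Type*} {l : List α} {k : ℕ} (h : l.length = k) :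
    (List.ofFn fun i : Fin k => l.get (finCongr h.symm i)) = l := by
  subst h
  simp [finCongr_refl]

lemma wordPerm_toList_perm (k : ℕ) (σ : Equiv.Perm (Fin k)) (w : FW) :
    (FreeMonoid.toList (wordPerm k σ w)).Perm (FreeMonoid.toList w) := by
  rw [wordPerm]
  split_ifs with h
  · have : (List.ofFn fun i : Fin k => (FreeMonoid.toList w).get (finCongr h.symm (σ⁻¹ i)))
        = List.ofFn ((fun i : Fin k => (FreeMonoid.toList w).get (finCongr h.symm i)) ∘ ⇑σ⁻¹) :=
      rfl
    rw [FreeMonoid.toList_ofList, this]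
    exact (Equiv.Perm.ofFn_comp_perm σ⁻¹ _).trans (by rw [ofFn_get_congr h])
  · exact List.Perm.refl _

lemma wordPerm_length (k : ℕ) (σ : Equiv.Perm (Fin k)) (w : FW) :
    (FreeMonoid.toList (wordPerm k σ w)).length = (FreeMonoid.toList w).length :=
  (wordPerm_toList_perm k σ w).length_eq

lemma wordPerm_count (k : ℕ) (σ : Equiv.Perm (Fin k)) (w : FW) (a : Fin 2) :
    (FreeMonoid.toList (wordPerm k σ w)).count a = (FreeMonoid.toList w).count a :=
  (wordPerm_toList_perm k σ w).count_eq a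

lemma wordPerm_map_sw (k : ℕ) (σ : Equiv.Perm (Fin k)) (w : FW) :
    wordPerm k σ (FreeMonoid.map sw w) = FreeMonoid.map sw (wordPerm k σ w) := by
  have hlen : (FreeMonoid.toList (FreeMonoid.map sw w)).length = (FreeMonoid.toList w).length := by
    rw [FreeMonoid.toList_map, List.length_map]
  rw [wordPerm, wordPerm]
  split_ifs with h1 h2 h2
  · apply FreeMonoid.toList.injective
    conv_rhs => rw [FreeMonoid.toList_map, FreeMonoid.toList_ofList, List.map_ofFn]
    rw [FreeMonoid.toList_ofList]
    congr 1
    funext i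
    simp [FreeMonoid.toList_map, List.get_eq_getElem, Function.comp]
    rfl
  · exact absurd (hlen ▸ h1) h2
  · exact absurd (hlen.symm ▸ h2) h1
  · rfl

lemma count_ofFn {α : Type*} [DecidableEq α] :
    ∀ (k : ℕ) (f : Fin k → α) (a : α),
      (List.ofFn f).count a = (Finset.univ.filter fun i => f i = a).card
  | 0, f, a => by simp
  | (k+1), f, a => by
    rw [List.ofFn_succ, List.count_cons, count_ofFn k (fun i => f i.succ) a]
    rw [Finset.card_filter, Finset.card_filter, Fin.sum_univ_succ]
    simp only [beq_iff_eq]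
    by_cases h : f 0 = a <;> simp [h, add_comm]

lemma exists_comp_perm {k : ℕ} {α : Type*} [DecidableEq α] (f g : Fin k → α)
    (h : ∀ a, (List.ofFn f).count a = (List.ofFn g).count a) :
    ∃ σ : Equiv.Perm (Fin k), f ∘ σ = g := by
  have hcard : ∀ a, Fintype.card {i // g i = a} = Fintype.card {i // f i = a} := by
    intro a
    rw [Fintype.card_subtype, Fintype.card_subtype, ← count_ofFn, ← count_ofFn, h a]
  let e : ∀ a, {i // g i = a} ≃ {i // f i = a} := fun a => Fintype.equivOfCardEq (hcard a)
  refine ⟨((Equiv.sigmaFiberEquiv g).symm.trans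
    ((Equiv.sigmaCongrRight e).trans (Equiv.sigmaFiberEquiv f))), ?_⟩
  funext i
  simp only [Function.comp_apply, Equiv.trans_apply, Equiv.sigmaFiberEquiv,
    Equiv.sigmaCongrRight, Equiv.coe_fn_symm_mk, Equiv.coe_fn_mk]
  exact (e (g i) ⟨i, rfl⟩).2

def baseW (b c : ℕ) : FW := FreeMonoid.ofList (List.replicate b 0 ++ List.replicate c 1)

lemma count_baseW0 (b c : ℕ) : (FreeMonoid.toList (baseW b c)).count 0 = b := by
  simp [baseW, List.count_append, List.count_replicate]

lemma count_baseW1 (b c : ℕ) : (FreeMonoid.toList (baseW b c)).count 1 = c := by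
  simp [baseW, List.count_append, List.count_replicate]

lemma length_baseW (b c : ℕ) : (FreeMonoid.toList (baseW b c)).length = b + c := by
  simp [baseW]

lemma of_pow_toList (x : Fin 2) (m : ℕ) :
    FreeMonoid.toList ((FreeMonoid.of x) ^ m) = List.replicate m x := by
  induction m with
  | zero => rfl
  | succ m ih => rw [pow_succ, FreeMonoid.toList_mul, ih, List.replicate_succ']; rfl

lemma gu_pow_gv_pow (b c : ℕ) :
    gu ^ b * gv ^ c = MonoidAlgebra.of ℂ FW (baseW b c) := by
  rw [gu, gv, ← map_pow, ← map_pow, ← map_mul]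
  congr 1
  apply FreeMonoid.toList.injective
  rw [FreeMonoid.toList_mul, of_pow_toList, of_pow_toList]
  rfl

lemma map_sw_baseW (b c : ℕ) :
    MonoidAlgebra.of ℂ FW (FreeMonoid.map sw (baseW b c)) = gv ^ b * gu ^ c := by
  rw [gu, gv, ← map_pow, ← map_pow, ← map_mul]
  congr 1
  apply FreeMonoid.toList.injective
  rw [FreeMonoid.toList_map, FreeMonoid.toList_mul, of_pow_toList, of_pow_toList]
  show List.map sw (List.replicate b 0 ++ List.replicate c 1) = _
  rw [List.map_append, List.map_replicate, List.map_replicate]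
  rfl

lemma count01_length : ∀ l : List (Fin 2), l.count 0 + l.count 1 = l.length
  | [] => by simp
  | x :: l => by
    rw [List.count_cons, List.count_cons, List.length_cons]
    have := count01_length l
    fin_cases x <;> simp <;> omega

lemma scal_one_iff (n : ℕ) (hn : 1 ≤ n) (w : FW) :
    scal n w = 1 ↔
      ((FreeMonoid.toList w).count 0 : ℤ) ≡ ((FreeMonoid.toList w).count 1 : ℤ) [ZMOD n] := by
  have hprim : IsPrimitiveRoot (xi n) n := Complex.isPrimitiveRoot_exp n (by omega)
  have hne := xi_ne_zero n
  have hsc : scal n w =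
      (xi n) ^ (((FreeMonoid.toList w).count 0 : ℤ) - ((FreeMonoid.toList w).count 1 : ℤ)) := by
    rw [zpow_sub₀ hne, zpow_natCast, zpow_natCast, div_eq_mul_inv, ← inv_pow]
    rfl
  rw [hsc, hprim.zpow_eq_one_iff_dvd, Int.modEq_iff_dvd, dvd_sub_comm]

lemma sw_inj : Function.Injective sw := Function.Involutive.injective sw_invol

lemma count_map_sw0 (w : FW) :
    (FreeMonoid.toList (FreeMonoid.map sw w)).count 0 = (FreeMonoid.toList w).count 1 := by
  rw [FreeMonoid.toList_map]
  have : (0 : Fin 2) = sw 1 := rfl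
  rw [this, List.count_map_of_injective _ sw sw_inj]

lemma count_map_sw1 (w : FW) :
    (FreeMonoid.toList (FreeMonoid.map sw w)).count 1 = (FreeMonoid.toList w).count 0 := by
  rw [FreeMonoid.toList_map]
  have : (1 : Fin 2) = sw 0 := rfl
  rw [this, List.count_map_of_injective _ sw sw_inj]

lemma pair_mem_invAlg (n : ℕ) (hn : 1 ≤ n) (w : FW)
    (hmod : ((FreeMonoid.toList w).count 0 : ℤ) ≡ ((FreeMonoid.toList w).count 1 : ℤ) [ZMOD n]) :
    (MonoidAlgebra.of ℂ FW w + MonoidAlgebra.of ℂ FW (FreeMonoid.map sw w)) ∈ invAlg n := by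
  constructor
  · show dRho n _ = AlgHom.id ℂ FA _
    rw [AlgHom.id_apply, map_add, dRho_of, dRho_of]
    rw [(scal_one_iff n hn w).mpr hmod,
      (scal_one_iff n hn (FreeMonoid.map sw w)).mpr (by
        rw [count_map_sw0, count_map_sw1]; exact hmod.symm)]
    simp
  · show dTau _ = AlgHom.id ℂ FA _
    rw [AlgHom.id_apply, map_add, dTau_of, dTau_of, map_sw_sw, add_comm]

lemma single_mem_degComp (j : ℕ) (w : FW) (h : FreeMonoid.length w = j) :
    MonoidAlgebra.single w (1 : ℂ) ∈ degComp j :=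
  MonoidAlgebra.mem_supported.mpr ((Finsupp.mem_supported ℂ _).mp
    (Finsupp.single_mem_supported ℂ (1 : ℂ) (show w ∈ {w : FW | FreeMonoid.length w = j} from h)))

lemma koryukin_pair (j b c : ℕ) (σ : Equiv.Perm (Fin j)) :
    koryukin j σ (gu ^ b * gv ^ c + gv ^ b * gu ^ c) =
      MonoidAlgebra.of ℂ FW (wordPerm j σ (baseW b c)) +
        MonoidAlgebra.of ℂ FW (FreeMonoid.map sw (wordPerm j σ (baseW b c))) := by
  rw [gu_pow_gv_pow, ← map_sw_baseW, map_add]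
  rw [MonoidAlgebra.of_apply, MonoidAlgebra.of_apply, koryukin_single, koryukin_single,
    wordPerm_map_sw, MonoidAlgebra.of_apply, MonoidAlgebra.of_apply]

/-- The degree-`j` homogeneous component of `ℂ⟨u,v⟩^{D_{2n}}` is spanned by the Koryukin
translates `(u^b v^c + v^b u^c) ∘ σ` with `b + c = j`, `b ≡ c (mod n)`, `σ ∈ Sym(j)`. -/
theorem invAlg_degComp_spanned_by_koryukin_translates (n : ℕ) (hn : 1 ≤ n) (j : ℕ)
    (hj : 1 ≤ j) :
    (invAlg n).toSubmodule ⊓ degComp j =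
      Submodule.span ℂ
        {x : FA | ∃ b c : ℕ, b + c = j ∧ (b : ℤ) ≡ (c : ℤ) [ZMOD n] ∧
          ∃ σ : Equiv.Perm (Fin j),
            x = koryukin j σ (gu ^ b * gv ^ c + gv ^ b * gu ^ c)} := by
  have hgen : ∀ w : FW, (FreeMonoid.toList w).length = j →
      ((FreeMonoid.toList w).count 0 : ℤ) ≡ ((FreeMonoid.toList w).count 1 : ℤ) [ZMOD n] →
      (MonoidAlgebra.of ℂ FW w + MonoidAlgebra.of ℂ FW (FreeMonoid.map sw w)) ∈
        (invAlg n).toSubmodule ⊓ degComp j := by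
    intro w hlen hmod
    refine ⟨pair_mem_invAlg n hn w hmod, ?_⟩
    rw [MonoidAlgebra.of_apply, MonoidAlgebra.of_apply]
    refine add_mem (single_mem_degComp j w hlen) (single_mem_degComp j _ ?_)
    show (FreeMonoid.toList (FreeMonoid.map sw w)).length = j
    rw [FreeMonoid.toList_map, List.length_map]
    exact hlen
  apply le_antisymm
  · -- the invariant component is inside the span
    rintro f ⟨hf, hdeg⟩
    obtain ⟨hρ, hτ⟩ := hf
    replace hρ : dRho n f = f := hρ
    replace hτ : dTau f = f := hτ
    have hco : ∀ w : FW, f.coeff w ≠ 0 →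
        ((FreeMonoid.toList w).count 0 : ℤ) ≡ ((FreeMonoid.toList w).count 1 : ℤ) [ZMOD n] := by
      intro w hw
      have h1 : scal n w * f.coeff w = f.coeff w := by
        conv_rhs => rw [← hρ]
        exact (dRho_apply n f w).symm
      have h2 : scal n w = 1 := by
        have h1' : scal n w * f.coeff w = 1 * f.coeff w := by rw [one_mul]; exact h1
        exact mul_right_cancel₀ hw h1'
      exact (scal_one_iff n hn w).mp h2
    have hsupp : ∀ w ∈ f.coeff.support, (FreeMonoid.toList w).length = j := by
      intro w hw
      exact MonoidAlgebra.mem_supported.mp hdeg hw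
    have key : f = (2⁻¹ : ℂ) • (f + dTau f) := by
      rw [hτ, ← two_smul ℂ f, smul_smul]
      norm_num
    have hsum : f + dTau f = f.coeff.sum fun w c =>
        c • (MonoidAlgebra.of ℂ FW w + MonoidAlgebra.of ℂ FW (FreeMonoid.map sw w)) := by
      rw [dTau_eq]
      conv_lhs => rw [← MonoidAlgebra.sum_coeff_single f]
      rw [MonoidAlgebra.mapDomain_sum, Finsupp.sum, Finsupp.sum, Finsupp.sum,
        ← Finset.sum_add_distrib]
      apply Finset.sum_congr rfl
      intro w _
      rw [MonoidAlgebra.mapDomain_single, smul_add, MonoidAlgebra.of_apply, MonoidAlgebra.of_apply,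
        MonoidAlgebra.smul_single', MonoidAlgebra.smul_single', mul_one]
    rw [key, hsum]
    refine Submodule.smul_mem _ _ (Submodule.sum_mem _ ?_)
    intro w hw
    refine Submodule.smul_mem _ _ (Submodule.subset_span ?_)
    have hfw : f.coeff w ≠ 0 := Finsupp.mem_support_iff.mp hw
    have hlen := hsupp w hw
    have hmod := hco w hfw
    set b := (FreeMonoid.toList w).count 0 with hb
    set c := (FreeMonoid.toList w).count 1 with hc
    have hbc : b + c = j := by rw [hb, hc, count01_length]; exact hlen
    have hbase : (FreeMonoid.toList (baseW b c)).length = j := by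
      rw [length_baseW]; exact hbc
    -- find σ
    obtain ⟨σ₀, hσ₀⟩ := exists_comp_perm
      (fun i : Fin j => (FreeMonoid.toList (baseW b c)).get (finCongr hbase.symm i))
      (fun i : Fin j => (FreeMonoid.toList w).get (finCongr hlen.symm i))
      (by
        intro a
        rw [ofFn_get_congr hbase, ofFn_get_congr hlen]
        fin_cases a
        · show (FreeMonoid.toList (baseW b c)).count 0 = (FreeMonoid.toList w).count 0
          rw [count_baseW0]
        · show (FreeMonoid.toList (baseW b c)).count 1 = (FreeMonoid.toList w).count 1
          rw [count_baseW1])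
    have hword : wordPerm j σ₀⁻¹ (baseW b c) = w := by
      rw [wordPerm, dif_pos hbase]
      have : (List.ofFn fun i : Fin j =>
          (FreeMonoid.toList (baseW b c)).get (finCongr hbase.symm ((σ₀⁻¹)⁻¹ i))) =
          List.ofFn fun i : Fin j => (FreeMonoid.toList w).get (finCongr hlen.symm i) := by
        rw [inv_inv]
        exact congrArg List.ofFn hσ₀
      rw [this, ofFn_get_congr hlen]
      exact FreeMonoid.ofList_toList w
    exact ⟨b, c, hbc, hmod, σ₀⁻¹, by rw [koryukin_pair, hword]⟩
  · -- the span is inside the invariant component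
    rw [Submodule.span_le]
    rintro x ⟨b, c, hbc, hmod, σ, rfl⟩
    rw [koryukin_pair]
    set w1 := wordPerm j σ (baseW b c) with hw1
    apply hgen
    · rw [hw1, wordPerm_length, length_baseW]; exact hbc
    · rw [hw1, wordPerm_count, wordPerm_count, count_baseW0, count_baseW1]
      exact hmod

end
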